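/- With the hypotheses of the Askey–Wilson setting below, (θ_0 − β·θ_0 + θ_1)·y_1 = ((β − 2)·θ_0² + ρ)·x_0 + ω·θ_0 + η, and (θ_{d−1} + θ_d − β·θ_d)·y_d = ((β − 2)·θ_d² + ρ)·x_d + ω·θ_d + η. -/

import Mathlib

/-- stmt13 of the paper, in the Askey–Wilson setting. -/
theorem stmt13 {F : Type*} [Field F] [IsAlgClosed F] {d : ℕ} (hd : 3 ≤ d)
    (q a a' b b' ξ : F) (hq : q ≠ 0)
    (hqru : ∀ n : ℕ, 1 ≤ n → q ^ n ≠ 1)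
    (θ : ℤ → F)
    (hθ : ∀ i : ℤ, θ i = a * q ^ (2 * i - (d : ℤ)) + a' * q ^ ((d : ℤ) - 2 * i))
    (hθdist : ∀ i j : ℕ, i ≤ d → j ≤ d → i ≠ j → θ i ≠ θ j)
    (β ρ ρs ω η ηs : F)
    (hβ : β = q ^ (2 : ℤ) + q ^ (-2 : ℤ))
    (hρ : ρ = -(a * a') * (q ^ (2 : ℤ) - q ^ (-2 : ℤ)) ^ 2)
    (hρs : ρs = -(b * b') * (q ^ (2 : ℤ) - q ^ (-2 : ℤ)) ^ 2)
    (hω : ω = (q - q⁻¹) ^ 2 *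
      ((q ^ ((d : ℤ) + 1) + q ^ (-(d : ℤ) - 1)) * ξ - (a + a') * (b + b')))
    (hη : η = -((q - q⁻¹) * (q ^ (2 : ℤ) - q ^ (-2 : ℤ)) *
      ((a + a') * ξ - a * a' * (b + b') * (q ^ ((d : ℤ) + 1) + q ^ (-(d : ℤ) - 1)))))
    (hηs : ηs = -((q - q⁻¹) * (q ^ (2 : ℤ) - q ^ (-2 : ℤ)) *
      ((b + b') * ξ - b * b' * (a + a') * (q ^ ((d : ℤ) + 1) + q ^ (-(d : ℤ) - 1)))))
    (x y z : ℕ → F)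
    (hyz : ∀ i : ℕ, 1 ≤ i → i ≤ d → y i * z i ≠ 0)
    (hy0 : y 0 = 0) (hyd1 : y (d + 1) = 0)
    (A As : Matrix (Fin (d + 1)) (Fin (d + 1)) F)
    (hA : ∀ i j : Fin (d + 1), A i j =
      if (i : ℕ) = (j : ℕ) then θ (i : ℕ)
      else if (i : ℕ) = (j : ℕ) + 1 then 1 else 0)
    (hAs : ∀ i j : Fin (d + 1), As i j =
      if (i : ℕ) = (j : ℕ) then x (i : ℕ)
      else if (i : ℕ) = (j : ℕ) + 1 then z (i : ℕ)
      else if (j : ℕ) = (i : ℕ) + 1 then y (j : ℕ) else 0)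
    (hAW1 : A ^ 2 * As - β • (A * As * A) + As * A ^ 2 - ρ • As =
      ω • A + η • (1 : Matrix (Fin (d + 1)) (Fin (d + 1)) F))
    (hAW2 : As ^ 2 * A - β • (As * A * As) + A * As ^ 2 - ρs • A =
      ω • As + ηs • (1 : Matrix (Fin (d + 1)) (Fin (d + 1)) F)) :
    (θ 0 - β * θ 0 + θ 1) * y 1 =
      ((β - 2) * θ 0 ^ 2 + ρ) * x 0 + ω * θ 0 + η ∧
    (θ ((d : ℤ) - 1) + θ (d : ℕ) - β * θ (d : ℕ)) * y d =
      ((β - 2) * θ (d : ℕ) ^ 2 + ρ) * x d + ω * θ (d : ℕ) + η := by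

  have h1d : 1 ≤ d := by omega
  set i0 : Fin (d+1) := ⟨0, by omega⟩ with hi0
  set i1 : Fin (d+1) := ⟨1, by omega⟩ with hi1
  set im : Fin (d+1) := ⟨d-1, by omega⟩ with him
  set iD : Fin (d+1) := ⟨d, by omega⟩ with hiD
  have hv0 : (i0 : ℕ) = 0 := rfl
  have hv1 : (i1 : ℕ) = 1 := rfl
  have hvm : (im : ℕ) = d - 1 := rfl
  have hvD : (iD : ℕ) = d := rfl
  -- two point sum lemma
  have twosum : ∀ (f : Fin (d+1) → F) (k1 k2 : Fin (d+1)), k1 ≠ k2 →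
      (∀ c : Fin (d+1), c ≠ k1 → c ≠ k2 → f c = 0) → (∑ k, f k) = f k1 + f k2 := by
    intro f k1 k2 hne h0
    rw [← Finset.sum_subset (Finset.subset_univ ({k1, k2} : Finset (Fin (d+1))))
      (fun c _ hc => by
        simp only [Finset.mem_insert, Finset.mem_singleton, not_or] at hc
        exact h0 c hc.1 hc.2)]
    rw [Finset.sum_pair hne]
  -- entry values of A
  have hA00 : A i0 i0 = θ 0 := by rw [hA]; simp [hv0]
  have hA10 : A i1 i0 = 1 := by rw [hA]; simp [hv0, hv1]
  have hA11 : A i1 i1 = θ 1 := by rw [hA]; simp [hv1]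
  have hcast : ((d - 1 : ℕ) : ℤ) = (d : ℤ) - 1 := by omega
  have hAmm : A im im = θ ((d : ℤ) - 1) := by
    rw [hA]; simp [hvm, hcast]
  have hADm : A iD im = 1 := by
    rw [hA]
    have h1 : ¬ ((iD : ℕ) = (im : ℕ)) := by rw [hvD, hvm]; omega
    have h2 : (iD : ℕ) = (im : ℕ) + 1 := by rw [hvD, hvm]; omega
    rw [if_neg h1, if_pos h2]
  have hADD : A iD iD = θ (d : ℕ) := by rw [hA]; simp [hvD]
  have hAmD : A im iD = 0 := by
    rw [hA]
    have h1 : ¬ ((im : ℕ) = (iD : ℕ)) := by omega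
    have h2 : ¬ ((im : ℕ) = (iD : ℕ) + 1) := by omega
    simp [h1, h2]
  -- entry values of As
  have hAs00 : As i0 i0 = x 0 := by rw [hAs]; simp [hv0]
  have hAs01 : As i0 i1 = y 1 := by
    rw [hAs]
    have h1 : ¬ ((i0 : ℕ) = (i1 : ℕ)) := by omega
    have h2 : ¬ ((i0 : ℕ) = (i1 : ℕ) + 1) := by omega
    have h3 : (i1 : ℕ) = (i0 : ℕ) + 1 := by omega
    simp [h1, h2, h3, hv1, hv0]
  have hAsmD : As im iD = y d := by
    rw [hAs]
    have h1 : ¬ ((im : ℕ) = (iD : ℕ)) := by rw [hvD, hvm]; omega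
    have h2 : ¬ ((im : ℕ) = (iD : ℕ) + 1) := by rw [hvD, hvm]; omega
    have h3 : (iD : ℕ) = (im : ℕ) + 1 := by rw [hvD, hvm]; omega
    rw [if_neg h1, if_neg h2, if_pos h3, hvD]
  have hAsDD : As iD iD = x d := by rw [hAs]; simp [hvD]
  -- row 0 of A
  have s1 : ∀ g : Fin (d+1) → F, (∑ k, A i0 k * g k) = θ 0 * g i0 := by
    intro g
    rw [Finset.sum_eq_single i0
      (fun c _ hc => by
        rw [hA]
        have h1 : ¬ ((i0 : ℕ) = (c : ℕ)) := by
          intro h; exact hc (Fin.ext h.symm)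
        have h2 : ¬ ((i0 : ℕ) = (c : ℕ) + 1) := by omega
        simp [h1, h2])
      (fun h => absurd (Finset.mem_univ i0) h), hA00]
  -- row 1 of A
  have s2 : ∀ g : Fin (d+1) → F, (∑ k, A i1 k * g k) = 1 * g i0 + θ 1 * g i1 := by
    intro g
    rw [twosum _ i0 i1 (by simp [Fin.ext_iff, hv0, hv1])
      (fun c hc0 hc1 => by
        rw [hA]
        have e0 : (c : ℕ) ≠ 0 := fun h => hc0 (Fin.ext h)
        have e1 : (c : ℕ) ≠ 1 := fun h => hc1 (Fin.ext h)
        have h1 : ¬ ((i1 : ℕ) = (c : ℕ)) := by omega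
        have h2 : ¬ ((i1 : ℕ) = (c : ℕ) + 1) := by omega
        simp [h1, h2]), hA10, hA11]
  -- row 0 of As
  have s3 : ∀ g : Fin (d+1) → F, (∑ k, As i0 k * g k) = x 0 * g i0 + y 1 * g i1 := by
    intro g
    rw [twosum _ i0 i1 (by simp [Fin.ext_iff, hv0, hv1])
      (fun c hc0 hc1 => by
        rw [hAs]
        have e0 : (c : ℕ) ≠ 0 := fun h => hc0 (Fin.ext h)
        have e1 : (c : ℕ) ≠ 1 := fun h => hc1 (Fin.ext h)
        have h1 : ¬ ((i0 : ℕ) = (c : ℕ)) := by omega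
        have h2 : ¬ ((i0 : ℕ) = (c : ℕ) + 1) := by omega
        have h3 : ¬ ((c : ℕ) = (i0 : ℕ) + 1) := by omega
        simp [h1, h2, h3]), hAs00, hAs01]
  -- column d of A
  have s4 : ∀ g : Fin (d+1) → F, (∑ k, g k * A k iD) = g iD * θ (d : ℕ) := by
    intro g
    rw [Finset.sum_eq_single iD
      (fun c _ hc => by
        rw [hA]
        have e0 : (c : ℕ) ≠ d := fun h => hc (Fin.ext h)
        have hcd : (c : ℕ) < d + 1 := c.2
        have h1 : ¬ ((c : ℕ) = (iD : ℕ)) := by omega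
        have h2 : ¬ ((c : ℕ) = (iD : ℕ) + 1) := by omega
        simp [h1, h2])
      (fun h => absurd (Finset.mem_univ iD) h), hADD]
  -- row d of A
  have s5 : ∀ g : Fin (d+1) → F, (∑ k, A iD k * g k) = 1 * g im + θ (d : ℕ) * g iD := by
    intro g
    rw [twosum _ im iD (by simp [Fin.ext_iff, hvm, hvD]; omega)
      (fun c hcm hcD => by
        rw [hA]
        have em : (c : ℕ) ≠ d - 1 := fun h => hcm (Fin.ext h)
        have eD : (c : ℕ) ≠ d := fun h => hcD (Fin.ext h)
        have h1 : ¬ ((iD : ℕ) = (c : ℕ)) := by omega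
        have h2 : ¬ ((iD : ℕ) = (c : ℕ) + 1) := by omega
        simp [h1, h2]), hADm, hADD]
  -- column d of As
  have s6 : ∀ g : Fin (d+1) → F, (∑ k, g k * As k iD) = g im * y d + g iD * x d := by
    intro g
    rw [twosum _ im iD (by simp [Fin.ext_iff, hvm, hvD]; omega)
      (fun c hcm hcD => by
        rw [hAs]
        have em : (c : ℕ) ≠ d - 1 := fun h => hcm (Fin.ext h)
        have eD : (c : ℕ) ≠ d := fun h => hcD (Fin.ext h)
        have hcd : (c : ℕ) < d + 1 := c.2
        have h1 : ¬ ((c : ℕ) = (iD : ℕ)) := by omega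
        have h2 : ¬ ((c : ℕ) = (iD : ℕ) + 1) := by omega
        have h3 : ¬ ((iD : ℕ) = (c : ℕ) + 1) := by omega
        simp [h1, h2, h3]), hAsmD, hAsDD]
  -- product entries at (0,0)
  have p1 : (A ^ 2 * As) i0 i0 = θ 0 * (θ 0 * x 0) := by
    rw [pow_two, Matrix.mul_assoc, Matrix.mul_apply, s1, Matrix.mul_apply, s1, hAs00]
  have p2 : (A * As * A) i0 i0 = θ 0 * (x 0 * θ 0 + y 1 * 1) := by
    rw [Matrix.mul_assoc, Matrix.mul_apply, s1, Matrix.mul_apply, s3, hA00, hA10]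
  have pAA00 : (A * A) i0 i0 = θ 0 * θ 0 := by
    rw [Matrix.mul_apply, s1, hA00]
  have pAA10 : (A * A) i1 i0 = 1 * θ 0 + θ 1 * 1 := by
    rw [Matrix.mul_apply, s2, hA00, hA10]
  have p3 : (As * A ^ 2) i0 i0 = x 0 * (θ 0 * θ 0) + y 1 * (1 * θ 0 + θ 1 * 1) := by
    rw [pow_two, Matrix.mul_apply, s3, pAA00, pAA10]
  -- product entries at (d,d)
  have pAADm : (A * A) iD im = 1 * θ ((d : ℤ) - 1) + θ (d : ℕ) * 1 := by
    rw [Matrix.mul_apply, s5, hAmm, hADm]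
  have pAADD : (A * A) iD iD = 1 * 0 + θ (d : ℕ) * θ (d : ℕ) := by
    rw [Matrix.mul_apply, s5, hAmD, hADD]
  have q1 : (A ^ 2 * As) iD iD =
      (1 * θ ((d : ℤ) - 1) + θ (d : ℕ) * 1) * y d + (1 * 0 + θ (d : ℕ) * θ (d : ℕ)) * x d := by
    rw [pow_two, Matrix.mul_apply, s6, pAADm, pAADD]
  have q2 : (A * As * A) iD iD = (1 * y d + θ (d : ℕ) * x d) * θ (d : ℕ) := by
    rw [Matrix.mul_apply, s4, Matrix.mul_apply, s5, hAsmD, hAsDD]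
  have q3 : (As * A ^ 2) iD iD = x d * θ (d : ℕ) * θ (d : ℕ) := by
    rw [pow_two, ← Matrix.mul_assoc, Matrix.mul_apply, s4, Matrix.mul_apply, s4, hAsDD]
  -- extract entries of the Askey-Wilson relation
  have e1 := congrArg (fun M : Matrix (Fin (d+1)) (Fin (d+1)) F => M i0 i0) hAW1
  have e2 := congrArg (fun M : Matrix (Fin (d+1)) (Fin (d+1)) F => M iD iD) hAW1
  simp only [Matrix.sub_apply, Matrix.add_apply, Matrix.smul_apply, smul_eq_mul,
    Matrix.one_apply_eq] at e1 e2
  rw [p1, p2, p3, hAs00, hA00] at e1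
  rw [q1, q2, q3, hAsDD, hADD] at e2
  constructor
  · linear_combination e1
  · linear_combination e2
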